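/- Two holomorphic slices suffice for slice regularity: Let F = (F₁, F₂) be a quaternionic stem function of class C¹ on D and f = I(F) the induced slice function on Ω_D. If there exist J, K ∈ 𝕊 with J ≠ K (the case K = −J being allowed) such that the restrictions f_J : D_J → ℍ and f_K : D_K → ℍ are holomorphic, i.e. (∂/∂α_t) f_J + J·(∂/∂β_t) f_J = 0 on D_J and (∂/∂α_t) f_K + K·(∂/∂β_t) f_K = 0 on D_K for each t = 1, …, n, then F is holomorphic and f is slice regular. -/

import Mathlib

/-- The sphere of quaternionic imaginary units. -/
def Sphere : Set (Quaternion ℝ) := {J | J * J = -1}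

/-- The point `α + iβ ∈ ℂⁿ`. -/
noncomputable def cpt {n : ℕ} (α β : Fin n → ℝ) : Fin n → ℂ :=
  fun t => (α t : ℂ) + (β t : ℂ) * Complex.I

/-- The point `α + βJ ∈ ℍⁿ`. -/
noncomputable def qpt {n : ℕ} (α β : Fin n → ℝ) (J : Quaternion ℝ) : Fin n → Quaternion ℝ :=
  fun t => (α t : Quaternion ℝ) + (β t : Quaternion ℝ) * J

/-- Componentwise complex conjugation on `ℂⁿ`. -/
def conjPt {n : ℕ} (z : Fin n → ℂ) : Fin n → ℂ := fun t => (starRingEnd ℂ) (z t)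

/-- Two holomorphic slices suffice for slice regularity. -/
theorem slice_regular_of_two_holomorphic_slices {n : ℕ} (D : Set (Fin n → ℂ)) (hD : IsOpen D)
    (hDconj : ∀ z ∈ D, conjPt z ∈ D)
    (F₁ F₂ : (Fin n → ℂ) → Quaternion ℝ)
    (hF₁ : ∀ z ∈ D, F₁ (conjPt z) = F₁ z)
    (hF₂ : ∀ z ∈ D, F₂ (conjPt z) = - F₂ z)
    (hF₁C : ContDiffOn ℝ 1 F₁ D) (hF₂C : ContDiffOn ℝ 1 F₂ D)
    (J K : Quaternion ℝ) (hJ : J ∈ Sphere) (hK : K ∈ Sphere) (hJK : J ≠ K)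
    (hfJ : ∀ t : Fin n, ∀ z ∈ D,
        fderiv ℝ (fun w => F₁ w + J * F₂ w) z (Pi.single t 1)
          + J * fderiv ℝ (fun w => F₁ w + J * F₂ w) z (Pi.single t Complex.I) = 0)
    (hfK : ∀ t : Fin n, ∀ z ∈ D,
        fderiv ℝ (fun w => F₁ w + K * F₂ w) z (Pi.single t 1)
          + K * fderiv ℝ (fun w => F₁ w + K * F₂ w) z (Pi.single t Complex.I) = 0) :
    ∀ t : Fin n, ∀ z ∈ D,
        fderiv ℝ F₁ z (Pi.single t 1) = fderiv ℝ F₂ z (Pi.single t Complex.I) ∧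
        fderiv ℝ F₁ z (Pi.single t Complex.I) = - fderiv ℝ F₂ z (Pi.single t 1) := by
  intro t z hz
  have hzmem : D ∈ nhds z := hD.mem_nhds hz
  have h1 : DifferentiableAt ℝ F₁ z :=
    ((hF₁C.differentiableOn one_ne_zero) z hz).differentiableAt hzmem
  have h2 : DifferentiableAt ℝ F₂ z :=
    ((hF₂C.differentiableOn one_ne_zero) z hz).differentiableAt hzmem
  have key : ∀ (L : Quaternion ℝ) (v : Fin n → ℂ),
      fderiv ℝ (fun w => F₁ w + L * F₂ w) z v
        = fderiv ℝ F₁ z v + L * fderiv ℝ F₂ z v := by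
    intro L v
    have hmul : HasFDerivAt (fun w => L * F₂ w)
        ((ContinuousLinearMap.mul ℝ (Quaternion ℝ) L).comp (fderiv ℝ F₂ z)) z :=
      (ContinuousLinearMap.mul ℝ (Quaternion ℝ) L).hasFDerivAt.comp z h2.hasFDerivAt
    have h := (h1.hasFDerivAt.add hmul).fderiv
    rw [show (fun w => F₁ w + L * F₂ w) = (F₁ + fun w => L * F₂ w) from rfl, h]; rfl
  set a := fderiv ℝ F₁ z (Pi.single t 1) with ha
  set b := fderiv ℝ F₁ z (Pi.single t Complex.I) with hb
  set c := fderiv ℝ F₂ z (Pi.single t 1) with hc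
  set e := fderiv ℝ F₂ z (Pi.single t Complex.I) with he
  have eJ := hfJ t z hz
  have eK := hfK t z hz
  rw [key J (Pi.single t 1), key J (Pi.single t Complex.I)] at eJ
  rw [key K (Pi.single t 1), key K (Pi.single t Complex.I)] at eK
  have hJ2 : J * J = -1 := hJ
  have hK2 : K * K = -1 := hK
  have eJ2 : (a - e) + J * (b + c) = 0 := by
    rw [mul_add J b, ← mul_assoc, hJ2] at eJ
    rw [← eJ]; noncomm_ring
  have eK2 : (a - e) + K * (b + c) = 0 := by
    rw [mul_add K b, ← mul_assoc, hK2] at eK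
    rw [← eK]; noncomm_ring
  have hsub : (J - K) * (b + c) = 0 := by
    calc (J - K) * (b + c)
        = ((a - e) + J * (b + c)) - ((a - e) + K * (b + c)) := by noncomm_ring
      _ = 0 := by rw [eJ2, eK2, sub_self]
  have hbc : b + c = 0 := by
    rcases mul_eq_zero.mp hsub with h | h
    · exact absurd (sub_eq_zero.mp h) hJK
    · exact h
  have hae : a = e := by
    have := eJ2
    rw [hbc, mul_zero, add_zero, sub_eq_zero] at this
    exact this
  exact ⟨hae, eq_neg_of_add_eq_zero_left hbc⟩
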